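/- Let A be a finite set with |A| = n+1 ≥ 6, and let (x_μ)_{μ∈A} be a family where x_μ is a tree without bivalent vertices with leaves labelled by A \ {μ}, satisfying ∂_α x_β = ∂_β x_α for all distinct α, β ∈ A. If there exist distinct labels α, β ∈ A such that the leaves α, β are non-adjacent in x_μ for every μ ∈ A \ {α, β}, then there exists a unique tree y with leaves labelled by A such that ∂_μ y = x_μ for all μ ∈ A. -/

import Mathlib

set_option linter.unusedSectionVars false

/-- A tree without bivalent vertices whose leaves are labelled bijectively by `A`,
encoded (via the split-equivalence theorem) by its set of splits: each internal
edge of the tree determines the bipartition of the leaf set into the leaves on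
its two sides; both sides have at least two elements and any two splits are
compatible (some pair of opposite sides is disjoint). -/
structure LTree (A : Type*) [Fintype A] [DecidableEq A] where
  splits : Finset (Finset A)
  compl_mem : ∀ B ∈ splits, Bᶜ ∈ splits
  two_le : ∀ B ∈ splits, 2 ≤ B.card
  two_le_compl : ∀ B ∈ splits, 2 ≤ Bᶜ.card
  compat : ∀ B ∈ splits, ∀ C ∈ splits,
    B ∩ C = ∅ ∨ B ∩ Cᶜ = ∅ ∨ Bᶜ ∩ C = ∅ ∨ Bᶜ ∩ Cᶜ = ∅

namespace LTree

variable {A B : Type*} [Fintype A] [DecidableEq A] [Fintype B] [DecidableEq B]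

@[ext] theorem ext' {t t' : LTree A} (h : t.splits = t'.splits) : t = t' := by
  cases t; cases t'; simpa using h

private lemma image_compl (e : A ≃ B) (S : Finset A) :
    (S.image e)ᶜ = Sᶜ.image e := by
  ext b
  simp only [Finset.mem_compl, Finset.mem_image]
  constructor
  · intro h
    exact ⟨e.symm b, fun hm => h ⟨e.symm b, hm, e.apply_symm_apply b⟩, e.apply_symm_apply b⟩
  · rintro ⟨a, ha, rfl⟩ ⟨a', ha', he⟩
    exact ha (e.injective he ▸ ha')

/-- Relabelling the leaves of a tree along a bijection of the label sets. -/
def relabel (e : A ≃ B) (t : LTree A) : LTree B where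
  splits := t.splits.image (Finset.image e)
  compl_mem := by
    simp only [Finset.mem_image, forall_exists_index, and_imp]
    rintro _ C hC rfl
    exact ⟨Cᶜ, t.compl_mem C hC, (image_compl e C).symm⟩
  two_le := by
    simp only [Finset.mem_image, forall_exists_index, and_imp]
    rintro _ C hC rfl
    rw [Finset.card_image_of_injective _ e.injective]
    exact t.two_le C hC
  two_le_compl := by
    simp only [Finset.mem_image, forall_exists_index, and_imp]
    rintro _ C hC rfl
    rw [image_compl e C, Finset.card_image_of_injective _ e.injective]
    exact t.two_le_compl C hC
  compat := by
    simp only [Finset.mem_image, forall_exists_index, and_imp]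
    rintro _ C hC rfl _ D hD rfl
    have key : ∀ S T : Finset A, S ∩ T = ∅ → (S.image e) ∩ (T.image e) = ∅ := by
      intro S T h
      rw [← Finset.image_inter _ _ e.injective, h, Finset.image_empty]
    rw [image_compl e C, image_compl e D]
    rcases t.compat C hC D hD with h | h | h | h
    · exact Or.inl (key _ _ h)
    · exact Or.inr (Or.inl (key _ _ h))
    · exact Or.inr (Or.inr (Or.inl (key _ _ h)))
    · exact Or.inr (Or.inr (Or.inr (key _ _ h)))

private lemma subtype_compl (μ : A) (S : Finset A) :
    (S.subtype (· ≠ μ))ᶜ = Sᶜ.subtype (· ≠ μ) := by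
  ext a
  simp [Finset.mem_subtype]

private lemma subtype_inter (μ : A) (S T : Finset A) :
    (S.subtype (· ≠ μ)) ∩ (T.subtype (· ≠ μ)) = (S ∩ T).subtype (· ≠ μ) := by
  ext a
  simp [Finset.mem_subtype]

/-- The map `∂_μ`: erase the leaf labelled `μ` (and smooth out any resulting
bivalent vertex).  In the split encoding this restricts every split to
`A \ {μ}` and discards the splits that become degenerate. -/
def del (t : LTree A) (μ : A) : LTree {a : A // a ≠ μ} where
  splits := (t.splits.image (fun C => C.subtype (· ≠ μ))).filter
      (fun C => 2 ≤ C.card ∧ 2 ≤ Cᶜ.card)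
  compl_mem := by
    simp only [Finset.mem_filter, Finset.mem_image, forall_exists_index, and_imp]
    rintro _ C hC rfl h1 h2
    refine ⟨⟨Cᶜ, t.compl_mem C hC, (subtype_compl μ C).symm⟩, ?_, ?_⟩
    · exact h2
    · rwa [compl_compl]
  two_le := fun C hC => ((Finset.mem_filter.mp hC).2).1
  two_le_compl := fun C hC => ((Finset.mem_filter.mp hC).2).2
  compat := by
    simp only [Finset.mem_filter, Finset.mem_image, forall_exists_index, and_imp]
    rintro _ C hC rfl - - _ D hD rfl - -
    have key : ∀ S T : Finset A, S ∩ T = ∅ →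
        (S.subtype (· ≠ μ)) ∩ (T.subtype (· ≠ μ)) = ∅ := by
      intro S T h
      rw [subtype_inter, h]
      ext a
      simp [Finset.mem_subtype]
    rw [subtype_compl μ C, subtype_compl μ D]
    rcases t.compat C hC D hD with h | h | h | h
    · exact Or.inl (key _ _ h)
    · exact Or.inr (Or.inl (key _ _ h))
    · exact Or.inr (Or.inr (Or.inl (key _ _ h)))
    · exact Or.inr (Or.inr (Or.inr (key _ _ h)))

/-- `S` is a "block" of `t`: the set of leaves hanging off a single edge,
i.e. either a single leaf or one side of an internal edge. -/
def Block (t : LTree A) (S : Finset A) : Prop := S.card = 1 ∨ S ∈ t.splits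

/-- Two leaves `α`, `β` of `t` are adjacent if either they are attached to the
same vertex (no split separates them), or their attachment vertices are both
trivalent and joined by an edge (there is a split separating them such that on
each side, removing the leaf leaves a single block). -/
def Adjacent (t : LTree A) (α β : A) : Prop :=
  (∀ C ∈ t.splits, (α ∈ C ↔ β ∈ C)) ∨
  ∃ C ∈ t.splits, α ∈ C ∧ β ∉ C ∧ t.Block (C.erase α) ∧ t.Block (Cᶜ.erase β)

end LTree

/-- The elements of `A` different from both `α` and `β`, obtained by two
successive subtype constructions, identified with the evident subtype. -/
def delTwoEquiv {A : Type*} [DecidableEq A] (α β : A) (h : β ≠ α) :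
    {y : {a : A // a ≠ α} // y ≠ (⟨β, h⟩ : {a : A // a ≠ α})} ≃ {a : A // a ≠ α ∧ a ≠ β} where
  toFun y := ⟨y.1.1, y.1.2, fun hb => y.2 (Subtype.ext hb)⟩
  invFun a := ⟨⟨a.1, a.2.1⟩, fun he => a.2.2 (congrArg Subtype.val he)⟩
  left_inv := fun _ => rfl
  right_inv := fun _ => rfl

section FillerAux

open Finset

variable {A : Type*} [Fintype A] [DecidableEq A]

/-- Restriction of a subset of `A` to the subtype `A \ {μ}`. -/
def rs (μ : A) (B : Finset A) : Finset {a : A // a ≠ μ} := B.subtype (· ≠ μ)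

lemma mem_rs {μ : A} {B : Finset A} {a : {a : A // a ≠ μ}} : a ∈ rs μ B ↔ a.1 ∈ B := by
  simp [rs, Finset.mem_subtype]

lemma rs_compl (μ : A) (B : Finset A) : (rs μ B)ᶜ = rs μ Bᶜ :=
  LTree.subtype_compl μ B

lemma rs_inter (μ : A) (B C : Finset A) : rs μ B ∩ rs μ C = rs μ (B ∩ C) :=
  LTree.subtype_inter μ B C

lemma rs_card (μ : A) (B : Finset A) : (rs μ B).card = (B.erase μ).card := by
  rw [rs, Finset.card_subtype, Finset.filter_ne']

lemma rs_erase (μ : A) (B : Finset A) : rs μ (B.erase μ) = rs μ B := by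
  ext a; simp [mem_rs, a.2]

lemma rs_insert (μ : A) (B : Finset A) : rs μ (insert μ B) = rs μ B := by
  ext a; simp [mem_rs, a.2]

lemma rs_map (μ : A) (C : Finset {a : A // a ≠ μ}) :
    rs μ (C.map (Function.Embedding.subtype _)) = C := by
  ext a
  simp only [mem_rs, Finset.mem_map, Function.Embedding.coe_subtype]
  constructor
  · rintro ⟨b, hb, hba⟩; rwa [Subtype.ext hba.symm]
  · intro h; exact ⟨a, h, rfl⟩

lemma erase_eq_of_rs_eq {μ : A} {B C : Finset A} (h : rs μ B = rs μ C) :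
    B.erase μ = C.erase μ := by
  ext a
  by_cases ha : a = μ
  · simp [ha]
  · have := Finset.ext_iff.mp h ⟨a, ha⟩
    simp only [mem_rs] at this
    simp [Finset.mem_erase, ha, this]

lemma cell_eq_empty {μ : A} {S : Finset A} (h : rs μ S = ∅) (hμ : μ ∉ S) : S = ∅ := by
  rw [Finset.eq_empty_iff_forall_notMem] at h ⊢
  intro a ha
  by_cases haμ : a = μ
  · exact hμ (haμ ▸ ha)
  · exact h ⟨a, haμ⟩ (mem_rs.mpr ha)

lemma cell_eq_singleton {μ : A} {S : Finset A} (h : rs μ S = ∅) (hμ : μ ∈ S) : S = {μ} := by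
  have : S ⊆ {μ} := by
    intro a ha
    rw [Finset.mem_singleton]
    by_contra haμ
    exact (Finset.eq_empty_iff_forall_notMem.mp h) ⟨a, haμ⟩ (mem_rs.mpr ha)
  exact Finset.Subset.antisymm this (Finset.singleton_subset_iff.mpr hμ)

lemma quad {μ : A} (t : LTree {a : A // a ≠ μ}) {B C : Finset A}
    (hB : rs μ B ∈ t.splits) (hC : rs μ C ∈ t.splits) :
    rs μ (B ∩ C) = ∅ ∨ rs μ (B ∩ Cᶜ) = ∅ ∨ rs μ (Bᶜ ∩ C) = ∅ ∨ rs μ (Bᶜ ∩ Cᶜ) = ∅ := by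
  have h := t.compat _ hB _ hC
  rw [rs_compl, rs_compl] at h
  rwa [rs_inter, rs_inter, rs_inter, rs_inter] at h

end FillerAux
section FillerAux2

open Finset

variable {A : Type*} [Fintype A] [DecidableEq A]

lemma mem_del_splits (t : LTree A) (μ : A) (C : Finset {a : A // a ≠ μ}) :
    C ∈ (t.del μ).splits ↔
      2 ≤ C.card ∧ 2 ≤ Cᶜ.card ∧ ∃ B ∈ t.splits, rs μ B = C := by
  unfold LTree.del
  simp only [Finset.mem_filter, Finset.mem_image]
  constructor
  · rintro ⟨⟨B, hB, rfl⟩, h1, h2⟩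
    exact ⟨h1, h2, B, hB, rfl⟩
  · rintro ⟨h1, h2, B, hB, rfl⟩
    exact ⟨⟨B, hB, rfl⟩, h1, h2⟩

/-- The defining predicate for the splits of the filler tree. -/
def GoodSet (x : ∀ μ : A, LTree {a : A // a ≠ μ}) (B : Finset A) : Prop :=
  2 ≤ B.card ∧ 2 ≤ Bᶜ.card ∧
    ∀ μ : A, 2 ≤ (B.erase μ).card → 2 ≤ (Bᶜ.erase μ).card → rs μ B ∈ (x μ).splits

variable {x : ∀ μ : A, LTree {a : A // a ≠ μ}}

instance : DecidablePred (GoodSet x) := fun B => by unfold GoodSet; infer_instance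

lemma GoodSet.compl {B : Finset A} (h : GoodSet x B) : GoodSet x Bᶜ := by
  obtain ⟨h1, h2, h3⟩ := h
  refine ⟨h2, by rwa [compl_compl], fun μ hm1 hm2 => ?_⟩
  rw [← rs_compl]
  refine (x μ).compl_mem _ (h3 μ ?_ hm1)
  rwa [compl_compl] at hm2

lemma two_le_of_two_mem {s : Finset A} {a b : A} (ha : a ∈ s) (hb : b ∈ s) (hab : a ≠ b) :
    2 ≤ s.card := by
  rw [show (2:ℕ) = ({a, b} : Finset A).card by rw [Finset.card_insert_of_notMem (by simpa using hab), Finset.card_singleton]]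
  exact Finset.card_le_card (by intro z hz; simp at hz; rcases hz with rfl | rfl <;> assumption)

lemma cell_card_split (s t : Finset A) : (s ∩ t).card + (s ∩ tᶜ).card = s.card := by
  rw [← Finset.card_union_of_disjoint]
  · congr 1
    ext a; by_cases h : a ∈ t <;> simp [h]
  · intro u hu hv a ha
    have h1 := hu ha
    have h2 := hv ha
    simp only [Finset.mem_inter, Finset.mem_compl] at h1 h2
    exact absurd h1.2 h2.2

lemma compat_core (hcard : 6 ≤ Fintype.card A) {B C : Finset A}
    (hB : GoodSet x B) (hC : GoodSet x C) (hBc : 3 ≤ Bᶜ.card) (hCc : 3 ≤ Cᶜ.card) :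
    B ∩ C = ∅ ∨ B ∩ Cᶜ = ∅ ∨ Bᶜ ∩ C = ∅ ∨ Bᶜ ∩ Cᶜ = ∅ := by
  by_contra hcon
  push_neg at hcon
  obtain ⟨h1, h2, h3, h4⟩ := hcon
  -- membership of splits for suitable μ
  have hBs : ∀ μ : A, μ ∉ B → rs μ B ∈ (x μ).splits := by
    intro μ hμ
    refine hB.2.2 μ ?_ ?_
    · rw [Finset.erase_eq_of_notMem hμ]; exact hB.1
    · rw [Finset.card_erase_of_mem (Finset.mem_compl.mpr hμ)]; omega
  have hCs : ∀ μ : A, μ ∉ C → rs μ C ∈ (x μ).splits := by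
    intro μ hμ
    refine hC.2.2 μ ?_ ?_
    · rw [Finset.erase_eq_of_notMem hμ]; exact hC.1
    · rw [Finset.card_erase_of_mem (Finset.mem_compl.mpr hμ)]; omega
  have hBs' : 3 ≤ B.card → ∀ μ : A, μ ∈ B → rs μ B ∈ (x μ).splits := by
    intro h3B μ hμ
    refine hB.2.2 μ ?_ ?_
    · rw [Finset.card_erase_of_mem hμ]; omega
    · rw [Finset.erase_eq_of_notMem (by simp [hμ])]; omega
  have hCs' : 3 ≤ C.card → ∀ μ : A, μ ∈ C → rs μ C ∈ (x μ).splits := by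
    intro h3C μ hμ
    refine hC.2.2 μ ?_ ?_
    · rw [Finset.card_erase_of_mem hμ]; omega
    · rw [Finset.erase_eq_of_notMem (by simp [hμ])]; omega
  have keyCC : ∀ μ : A, rs μ B ∈ (x μ).splits → rs μ C ∈ (x μ).splits →
      μ ∈ Bᶜ ∩ Cᶜ → Bᶜ ∩ Cᶜ = {μ} := by
    intro μ hmB hmC hμ
    simp only [Finset.mem_inter, Finset.mem_compl] at hμ
    rcases quad (x μ) hmB hmC with h | h | h | h
    · exact absurd (cell_eq_empty h (by simp [hμ.1])) h1.ne_empty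
    · exact absurd (cell_eq_empty h (by simp [hμ.1])) h2.ne_empty
    · exact absurd (cell_eq_empty h (by simp [hμ.2])) h3.ne_empty
    · exact cell_eq_singleton h (by simp [hμ.1, hμ.2])
  have keyBC : ∀ μ : A, rs μ B ∈ (x μ).splits → rs μ C ∈ (x μ).splits →
      μ ∈ Bᶜ ∩ C → Bᶜ ∩ C = {μ} := by
    intro μ hmB hmC hμ
    simp only [Finset.mem_inter, Finset.mem_compl] at hμ
    rcases quad (x μ) hmB hmC with h | h | h | h
    · exact absurd (cell_eq_empty h (by simp [hμ.1])) h1.ne_empty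
    · exact absurd (cell_eq_empty h (by simp [hμ.1])) h2.ne_empty
    · exact cell_eq_singleton h (by simp [hμ.1, hμ.2])
    · exact absurd (cell_eq_empty h (by simp [hμ.2])) h4.ne_empty
  have keyBc : ∀ μ : A, rs μ B ∈ (x μ).splits → rs μ C ∈ (x μ).splits →
      μ ∈ B ∩ Cᶜ → B ∩ Cᶜ = {μ} := by
    intro μ hmB hmC hμ
    simp only [Finset.mem_inter, Finset.mem_compl] at hμ
    rcases quad (x μ) hmB hmC with h | h | h | h
    · exact absurd (cell_eq_empty h (by simp [hμ.2])) h1.ne_empty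
    · exact cell_eq_singleton h (by simp [hμ.1, hμ.2])
    · exact absurd (cell_eq_empty h (by simp [hμ.1])) h3.ne_empty
    · exact absurd (cell_eq_empty h (by simp [hμ.1])) h4.ne_empty
  -- cardinality bounds on the cells
  have hsingle : ∀ S : Finset A, (∀ μ ∈ S, S = {μ}) → S.card ≤ 1 := by
    intro S hS
    by_contra hc
    push_neg at hc
    obtain ⟨a, ha, b, hb, hab⟩ := Finset.one_lt_card.mp hc
    rw [hS a ha] at hb
    exact hab (Finset.mem_singleton.mp hb).symm
  have hCCle : (Bᶜ ∩ Cᶜ).card ≤ 1 := by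
    refine hsingle _ fun μ hμ => ?_
    have hμ' := hμ
    simp only [Finset.mem_inter, Finset.mem_compl] at hμ'
    exact keyCC μ (hBs μ hμ'.1) (hCs μ hμ'.2) hμ
  by_cases h3C : 3 ≤ C.card
  · have hBCle : (Bᶜ ∩ C).card ≤ 1 := by
      refine hsingle _ fun μ hμ => ?_
      have hμ' := hμ
      simp only [Finset.mem_inter, Finset.mem_compl] at hμ'
      exact keyBC μ (hBs μ hμ'.1) (hCs' h3C μ hμ'.2) hμ
    have := cell_card_split Bᶜ C
    omega
  · by_cases h3B : 3 ≤ B.card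
    · have hBcle : (B ∩ Cᶜ).card ≤ 1 := by
        refine hsingle _ fun μ hμ => ?_
        have hμ' := hμ
        simp only [Finset.mem_inter, Finset.mem_compl] at hμ'
        exact keyBc μ (hBs' h3B μ hμ'.1) (hCs μ hμ'.2) hμ
      have hcc := cell_card_split Cᶜ B
      rw [Finset.inter_comm Cᶜ B, Finset.inter_comm Cᶜ Bᶜ] at hcc
      omega
    · -- |B| = 2 and |C| = 2
      have hu : Bᶜ ∩ Cᶜ = (B ∪ C)ᶜ := by rw [Finset.compl_union]
      have hcu : (B ∪ C).card ≤ B.card + C.card := Finset.card_union_le _ _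
      have hccard : (B ∪ C)ᶜ.card = Fintype.card A - (B ∪ C).card := by
        rw [Finset.card_compl]
      rw [hu] at hCCle
      omega

end FillerAux2
section FillerAux3

open Finset

variable {A : Type*} [Fintype A] [DecidableEq A] {x : ∀ μ : A, LTree {a : A // a ≠ μ}}

lemma compat_full (hcard : 6 ≤ Fintype.card A) {B C : Finset A}
    (hB : GoodSet x B) (hC : GoodSet x C) :
    B ∩ C = ∅ ∨ B ∩ Cᶜ = ∅ ∨ Bᶜ ∩ C = ∅ ∨ Bᶜ ∩ Cᶜ = ∅ := by
  have hcB := Finset.card_compl B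
  have hcC := Finset.card_compl C
  have hBle := Finset.card_le_univ B
  have hCle := Finset.card_le_univ C
  have half : ∀ B' C' : Finset A, GoodSet x B' → GoodSet x C' → 3 ≤ B'ᶜ.card →
      B' ∩ C' = ∅ ∨ B' ∩ C'ᶜ = ∅ ∨ B'ᶜ ∩ C' = ∅ ∨ B'ᶜ ∩ C'ᶜ = ∅ := by
    intro B' C' hB' hC' hBc'
    by_cases hCc' : 3 ≤ C'ᶜ.card
    · exact compat_core hcard hB' hC' hBc' hCc'
    · have h2 : 2 ≤ C'ᶜ.card := hC'.2.1
      have hcC' := Finset.card_compl C'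
      have hC'le := Finset.card_le_univ C'
      have h3 : 3 ≤ C'ᶜᶜ.card := by rw [compl_compl]; omega
      rcases compat_core hcard hB' hC'.compl hBc' h3 with h | h | h | h
      all_goals try rw [compl_compl] at h
      all_goals tauto
  by_cases hBc : 3 ≤ Bᶜ.card
  · exact half B C hB hC hBc
  · have h3 : 3 ≤ Bᶜᶜ.card := by
      have h2 : 2 ≤ Bᶜ.card := hB.2.1
      rw [compl_compl]; omega
    rcases half Bᶜ C hB.compl hC h3 with h | h | h | h
    all_goals try rw [compl_compl] at h
    all_goals tauto

/-- The filler tree: its splits are all the "good" subsets of `A`. -/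
def filler (hcard : 6 ≤ Fintype.card A) (x : ∀ μ : A, LTree {a : A // a ≠ μ}) : LTree A where
  splits := Finset.univ.filter (GoodSet x)
  compl_mem := by
    intro B hB
    rw [Finset.mem_filter] at hB ⊢
    exact ⟨Finset.mem_univ _, hB.2.compl⟩
  two_le := by
    intro B hB
    exact ((Finset.mem_filter.mp hB).2).1
  two_le_compl := by
    intro B hB
    exact ((Finset.mem_filter.mp hB).2).2.1
  compat := by
    intro B hB C hC
    exact compat_full hcard ((Finset.mem_filter.mp hB).2) ((Finset.mem_filter.mp hC).2)

lemma mem_filler {hcard : 6 ≤ Fintype.card A} {B : Finset A} :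
    B ∈ (filler hcard x).splits ↔ GoodSet x B := by
  unfold filler
  rw [Finset.mem_filter]
  simp

lemma mem_splits_of_del {y y' : LTree A} (h : ∀ μ : A, y.del μ = y'.del μ)
    {B : Finset A} (hB : B ∈ y.splits) (h3 : 3 ≤ B.card) : B ∈ y'.splits := by
  have h2c : 2 ≤ Bᶜ.card := y.two_le_compl _ hB
  obtain ⟨μ, hμB, ν, hνB, hμν⟩ := Finset.one_lt_card.mp (by omega : 1 < B.card)
  have lift : ∀ κ ∈ B, B ∈ y'.splits ∨ B.erase κ ∈ y'.splits := by
    intro κ hκ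
    have hmem : rs κ B ∈ (y.del κ).splits := by
      rw [mem_del_splits]
      refine ⟨?_, ?_, B, hB, rfl⟩
      · rw [rs_card, Finset.card_erase_of_mem hκ]; omega
      · rw [rs_compl, rs_card, Finset.erase_eq_of_notMem (by simp [hκ])]; omega
    rw [h κ] at hmem
    obtain ⟨-, -, C, hC, hCB⟩ := (mem_del_splits _ _ _).mp hmem
    have he := erase_eq_of_rs_eq hCB
    by_cases hκC : κ ∈ C
    · left
      rw [show B = C by rw [← Finset.insert_erase hκ, ← he, Finset.insert_erase hκC]]
      exact hC
    · right
      rw [show B.erase κ = C by rw [← he, Finset.erase_eq_of_notMem hκC]]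
      exact hC
  rcases lift μ hμB with hBy | hμ'
  · exact hBy
  rcases lift ν hνB with hBy | hν'
  · exact hBy
  exfalso
  rcases y'.compat _ hμ' _ hν' with hq | hq | hq | hq
  · obtain ⟨w, hw⟩ := Finset.card_pos.mp
      (by rw [Finset.card_erase_of_mem (Finset.mem_erase.mpr ⟨hμν.symm, hνB⟩),
              Finset.card_erase_of_mem hμB]; omega :
        0 < ((B.erase μ).erase ν).card)
    rw [Finset.mem_erase] at hw
    have : w ∈ B.erase μ ∩ B.erase ν := by
      rw [Finset.mem_inter, Finset.mem_erase, Finset.mem_erase]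
      have h1 := hw.2
      rw [Finset.mem_erase] at h1
      exact ⟨h1, hw.1, h1.2⟩
    rw [hq] at this
    exact absurd this (Finset.notMem_empty _)
  · have : ν ∈ B.erase μ ∩ (B.erase ν)ᶜ := by
      rw [Finset.mem_inter, Finset.mem_erase, Finset.mem_compl]
      exact ⟨⟨hμν.symm, hνB⟩, Finset.notMem_erase _ _⟩
    rw [hq] at this
    exact absurd this (Finset.notMem_empty _)
  · have : μ ∈ (B.erase μ)ᶜ ∩ B.erase ν := by
      rw [Finset.mem_inter, Finset.mem_erase, Finset.mem_compl]
      exact ⟨Finset.notMem_erase _ _, hμν, hμB⟩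
    rw [hq] at this
    exact absurd this (Finset.notMem_empty _)
  · obtain ⟨w, hw⟩ := Finset.card_pos.mp (by omega : 0 < Bᶜ.card)
    rw [Finset.mem_compl] at hw
    have : w ∈ (B.erase μ)ᶜ ∩ (B.erase ν)ᶜ := by
      rw [Finset.mem_inter, Finset.mem_compl, Finset.mem_compl]
      constructor <;> · rw [Finset.mem_erase]; tauto
    rw [hq] at this
    exact absurd this (Finset.notMem_empty _)

lemma filler_unique (hcard : 6 ≤ Fintype.card A) {y y' : LTree A}
    (h : ∀ μ : A, y.del μ = y'.del μ) : y = y' := by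
  have h' : ∀ μ : A, y'.del μ = y.del μ := fun μ => (h μ).symm
  have main : ∀ (z z' : LTree A), (∀ μ : A, z.del μ = z'.del μ) → z.splits ⊆ z'.splits := by
    intro z z' hz B hB
    by_cases h3 : 3 ≤ B.card
    · exact mem_splits_of_del hz hB h3
    · have h2 : 2 ≤ B.card := z.two_le _ hB
      have hc := Finset.card_compl B
      have hle := Finset.card_le_univ B
      have h3c : 3 ≤ Bᶜ.card := by omega
      have := mem_splits_of_del hz (z.compl_mem _ hB) h3c
      have := z'.compl_mem _ this
      rwa [compl_compl] at this
  exact LTree.ext' (Finset.Subset.antisymm (main y y' h) (main y' y h'))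

end FillerAux3
section FillerAux4

open Finset

variable {A : Type*} [Fintype A] [DecidableEq A] {x : ∀ μ : A, LTree {a : A // a ≠ μ}}

lemma erase_comm' (s : Finset A) (a b : A) : (s.erase a).erase b = (s.erase b).erase a := by
  ext c
  simp only [Finset.mem_erase]
  tauto

/-- Restriction of a subset of `A` to the subtype `A \ {μ, ν}`. -/
def rs2 (μ ν : A) (B : Finset A) : Finset {a : A // a ≠ μ ∧ a ≠ ν} :=
  B.subtype (fun a => a ≠ μ ∧ a ≠ ν)

lemma mem_rs2 {μ ν : A} {B : Finset A} {a : {a : A // a ≠ μ ∧ a ≠ ν}} :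
    a ∈ rs2 μ ν B ↔ a.1 ∈ B := by
  simp [rs2, Finset.mem_subtype]

lemma rs2_compl (μ ν : A) (B : Finset A) : (rs2 μ ν B)ᶜ = rs2 μ ν Bᶜ := by
  ext a; simp [mem_rs2]

lemma rs2_card (μ ν : A) (B : Finset A) :
    (rs2 μ ν B).card = ((B.erase μ).erase ν).card := by
  rw [rs2, Finset.card_subtype]
  congr 1
  ext a
  simp only [Finset.mem_filter, Finset.mem_erase]
  tauto

lemma erase2_eq_of_rs2_eq {μ ν : A} {B C : Finset A} (h : rs2 μ ν B = rs2 μ ν C) :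
    (B.erase μ).erase ν = (C.erase μ).erase ν := by
  ext a
  by_cases haμ : a = μ
  · simp [haμ, Finset.mem_erase]
  by_cases haν : a = ν
  · simp [haν, Finset.mem_erase]
  · have := Finset.ext_iff.mp h ⟨a, haμ, haν⟩
    simp only [mem_rs2] at this
    simp [Finset.mem_erase, haμ, haν, this]

lemma mem_relabel {B C : Type*} [Fintype B] [DecidableEq B] [Fintype C] [DecidableEq C]
    (t : LTree B) (e : B ≃ C) (d : Finset C) :
    d ∈ (t.relabel e).splits ↔ ∃ c ∈ t.splits, c.image e = d := by
  unfold LTree.relabel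
  simp [Finset.mem_image]

lemma glue_L (μ ν : A) (h : ν ≠ μ) (B : Finset A) :
    ((rs μ B).subtype (· ≠ (⟨ν, h⟩ : {a : A // a ≠ μ}))).image (delTwoEquiv μ ν h) =
      rs2 μ ν B := by
  ext a
  obtain ⟨a, haμ, haν⟩ := a
  simp only [Finset.mem_image, Finset.mem_subtype, mem_rs, mem_rs2]
  constructor
  · rintro ⟨y, hy, heq⟩
    have hv : (y.1.1 : A) = a := congrArg Subtype.val heq
    rwa [← hv]
  · intro ha
    exact ⟨⟨⟨a, haμ⟩, fun he => haν (congrArg Subtype.val he)⟩, ha, rfl⟩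

lemma glue_R (μ ν : A) (h : ν ≠ μ) (C : Finset A) :
    ((((rs ν C).subtype (· ≠ (⟨μ, h.symm⟩ : {a : A // a ≠ ν}))).image
        (delTwoEquiv ν μ h.symm)).image (Equiv.subtypeEquivRight (fun a => and_comm))) =
      rs2 μ ν C := by
  ext a
  obtain ⟨a, haμ, haν⟩ := a
  simp only [Finset.mem_image, Finset.mem_subtype, mem_rs, mem_rs2]
  constructor
  · rintro ⟨b, ⟨y, hy, heq1⟩, heq2⟩
    have hv1 : (y.1.1 : A) = b.1 := congrArg Subtype.val heq1
    have hv2 : (b.1 : A) = a := congrArg Subtype.val heq2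
    rwa [← hv2, ← hv1]
  · intro ha
    refine ⟨⟨a, haν, haμ⟩, ⟨⟨⟨a, haν⟩, fun he => haμ (congrArg Subtype.val he)⟩, ha, rfl⟩, rfl⟩

lemma mem_LHS {μ ν : A} (h : ν ≠ μ) (d : Finset {a : A // a ≠ μ ∧ a ≠ ν}) :
    d ∈ (((x μ).del ⟨ν, h⟩).relabel (delTwoEquiv μ ν h)).splits ↔
      2 ≤ d.card ∧ 2 ≤ dᶜ.card ∧ ∃ B : Finset A, rs μ B ∈ (x μ).splits ∧ rs2 μ ν B = d := by
  rw [mem_relabel]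
  constructor
  · rintro ⟨c, hc, rfl⟩
    obtain ⟨h1, h2, E, hE, hEc⟩ := (mem_del_splits _ _ _).mp hc
    refine ⟨?_, ?_, E.map (Function.Embedding.subtype _), by rwa [rs_map], ?_⟩
    · rwa [Finset.card_image_of_injective _ (delTwoEquiv μ ν h).injective]
    · rwa [LTree.image_compl, Finset.card_image_of_injective _ (delTwoEquiv μ ν h).injective]
    · rw [← glue_L μ ν h]
      congr 1
      rw [rs_map]
      exact hEc
  · rintro ⟨h1, h2, B, hB, rfl⟩
    refine ⟨(rs μ B).subtype (· ≠ (⟨ν, h⟩ : {a : A // a ≠ μ})), ?_, glue_L μ ν h B⟩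
    rw [mem_del_splits]
    refine ⟨?_, ?_, rs μ B, hB, rfl⟩
    · rwa [← glue_L μ ν h, Finset.card_image_of_injective _ (delTwoEquiv μ ν h).injective] at h1
    · rwa [← glue_L μ ν h, LTree.image_compl,
        Finset.card_image_of_injective _ (delTwoEquiv μ ν h).injective] at h2

lemma mem_RHS {μ ν : A} (h : ν ≠ μ) (d : Finset {a : A // a ≠ μ ∧ a ≠ ν}) :
    d ∈ ((((x ν).del ⟨μ, h.symm⟩).relabel (delTwoEquiv ν μ h.symm)).relabel
        (Equiv.subtypeEquivRight (fun a => and_comm))).splits ↔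
      2 ≤ d.card ∧ 2 ≤ dᶜ.card ∧ ∃ C : Finset A, rs ν C ∈ (x ν).splits ∧ rs2 μ ν C = d := by
  rw [mem_relabel]
  constructor
  · rintro ⟨c, hc, rfl⟩
    rw [mem_relabel] at hc
    obtain ⟨c', hc', rfl⟩ := hc
    obtain ⟨h1, h2, E, hE, hEc⟩ := (mem_del_splits _ _ _).mp hc'
    refine ⟨?_, ?_, E.map (Function.Embedding.subtype _), by rwa [rs_map], ?_⟩
    · rwa [Finset.card_image_of_injective _ (Equiv.subtypeEquivRight (fun a => and_comm)).injective,
        Finset.card_image_of_injective _ (delTwoEquiv ν μ h.symm).injective]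
    · rwa [LTree.image_compl, LTree.image_compl,
        Finset.card_image_of_injective _ (Equiv.subtypeEquivRight (fun a => and_comm)).injective,
        Finset.card_image_of_injective _ (delTwoEquiv ν μ h.symm).injective]
    · rw [← glue_R μ ν h]
      congr 2
      rw [rs_map]
      exact hEc
  · rintro ⟨h1, h2, C, hC, rfl⟩
    refine ⟨((rs ν C).subtype (· ≠ (⟨μ, h.symm⟩ : {a : A // a ≠ ν}))).image
        (delTwoEquiv ν μ h.symm), ?_, glue_R μ ν h C⟩
    rw [mem_relabel]
    refine ⟨(rs ν C).subtype (· ≠ (⟨μ, h.symm⟩ : {a : A // a ≠ ν})), ?_, rfl⟩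
    rw [mem_del_splits]
    have hcards := glue_R μ ν h C
    refine ⟨?_, ?_, rs ν C, hC, rfl⟩
    · rwa [← hcards,
        Finset.card_image_of_injective _ (Equiv.subtypeEquivRight (fun a => and_comm)).injective,
        Finset.card_image_of_injective _ (delTwoEquiv ν μ h.symm).injective] at h1
    · rwa [← hcards, LTree.image_compl, LTree.image_compl,
        Finset.card_image_of_injective _ (Equiv.subtypeEquivRight (fun a => and_comm)).injective,
        Finset.card_image_of_injective _ (delTwoEquiv ν μ h.symm).injective] at h2

lemma transfer
    (hcompat : ∀ (α β : A) (h : α ≠ β),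
      ((x β).del ⟨α, h⟩).relabel (delTwoEquiv β α h) =
        ((((x α).del ⟨β, h.symm⟩).relabel (delTwoEquiv α β h.symm)).relabel
          (Equiv.subtypeEquivRight (fun a => and_comm))))
    {μ ν : A} (h : ν ≠ μ) {B : Finset A}
    (hB : rs μ B ∈ (x μ).splits)
    (h1 : 2 ≤ ((B.erase μ).erase ν).card)
    (h2 : 2 ≤ ((Bᶜ.erase μ).erase ν).card) :
    ∃ C : Finset A, ν ∉ C ∧ rs ν C ∈ (x ν).splits ∧ C.erase μ = (B.erase μ).erase ν := by
  have hd : rs2 μ ν B ∈ (((x μ).del ⟨ν, h⟩).relabel (delTwoEquiv μ ν h)).splits := by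
    rw [mem_LHS h]
    refine ⟨?_, ?_, B, hB, rfl⟩
    · rwa [rs2_card]
    · rwa [rs2_compl, rs2_card]
  rw [hcompat ν μ h] at hd
  obtain ⟨-, -, C0, hC0, hC0d⟩ := (mem_RHS h _).mp hd
  refine ⟨C0.erase ν, Finset.notMem_erase _ _, by rwa [rs_erase], ?_⟩
  have he := erase2_eq_of_rs2_eq hC0d
  rw [erase_comm', ← he, erase_comm']

end FillerAux4
section FillerAux5

open Finset

variable {A : Type*} [Fintype A] [DecidableEq A] {x : ∀ μ : A, LTree {a : A // a ≠ μ}}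

lemma not_mem_insert_of {A : Type*} [DecidableEq A] {a b : A} {s : Finset A}
    (h1 : a ≠ b) (h2 : a ∉ s) : a ∉ insert b s := by
  simp [Finset.mem_insert, h1, h2]

lemma rs_empty_absurd {κ : A} {S : Finset A} (h : rs κ S = ∅) {w : A}
    (hw : w ∈ S) (hwκ : w ≠ κ) : False :=
  (Finset.eq_empty_iff_forall_notMem.mp h) ⟨w, hwκ⟩ (mem_rs.mpr hw)

variable (hcompat : ∀ (α β : A) (h : α ≠ β),
      ((x β).del ⟨α, h⟩).relabel (delTwoEquiv β α h) =
        ((((x α).del ⟨β, h.symm⟩).relabel (delTwoEquiv α β h.symm)).relabel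
          (Equiv.subtypeEquivRight (fun a => and_comm))))

include hcompat

lemma keep_or_add {μ ν : A} (hνμ : ν ≠ μ) {D : Finset A} (hμD : μ ∉ D)
    (hD : rs μ D ∈ (x μ).splits) (h1 : 2 ≤ (D.erase ν).card)
    (h2 : 2 ≤ ((Dᶜ.erase μ).erase ν).card) :
    rs ν D ∈ (x ν).splits ∨ rs ν (insert μ D) ∈ (x ν).splits := by
  obtain ⟨C, hνC, hCs, hCe⟩ := transfer hcompat hνμ hD
    (by rwa [Finset.erase_eq_of_notMem hμD]) h2
  rw [Finset.erase_eq_of_notMem hμD] at hCe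
  by_cases hμC : μ ∈ C
  · right
    have hC : C = insert μ (D.erase ν) := by rw [← hCe, Finset.insert_erase hμC]
    rw [hC, ← Finset.erase_insert_of_ne (Ne.symm hνμ), rs_erase] at hCs
    exact hCs
  · left
    have hC : C = D.erase ν := by rw [← hCe, Finset.erase_eq_of_notMem hμC]
    rwa [hC, rs_erase] at hCs

lemma contagion {μ : A} {D : Finset A} (hμD : μ ∉ D) (hco3 : 3 ≤ (Dᶜ.erase μ).card)
    {ν₂ : A} (hν₂μ : ν₂ ≠ μ) (hν₂D : 2 ≤ (D.erase ν₂).card)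
    (hk : rs ν₂ D ∉ (x ν₂).splits) (ha : rs ν₂ (insert μ D) ∈ (x ν₂).splits)
    {l : A} (hlD : l ∉ D) (hlμ : l ≠ μ) (hlν : l ≠ ν₂)
    (hkl : rs l D ∈ (x l).splits) : False := by
  -- a witness element of Dᶜ besides μ, l, ν₂
  obtain ⟨w, hw⟩ : ∃ w, w ∈ ((Dᶜ.erase μ).erase l).erase ν₂ := by
    apply Finset.card_pos.mp
    have e1 := Finset.pred_card_le_card_erase (s := Dᶜ.erase μ) (a := l)
    have e2 := Finset.pred_card_le_card_erase (s := (Dᶜ.erase μ).erase l) (a := ν₂)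
    omega
  simp only [Finset.mem_erase, Finset.mem_compl] at hw
  obtain ⟨hwν₂, hwl, hwμ, hwD⟩ := hw
  obtain ⟨C, hν₂C, hCs, hCe⟩ := transfer hcompat (Ne.symm hlν) hkl
    (by rwa [Finset.erase_eq_of_notMem hlD])
    (by
      refine two_le_of_two_mem (a := μ) (b := w) ?_ ?_ (Ne.symm hwμ)
      · simp only [Finset.mem_erase, Finset.mem_compl]
        exact ⟨Ne.symm hν₂μ, Ne.symm hlμ, hμD⟩
      · simp only [Finset.mem_erase, Finset.mem_compl]
        exact ⟨hwν₂, hwl, hwD⟩)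
  rw [Finset.erase_eq_of_notMem hlD] at hCe
  by_cases hlC : l ∈ C
  · have hC : C = insert l (D.erase ν₂) := by rw [← hCe, Finset.insert_erase hlC]
    rw [hC] at hCs
    obtain ⟨w₀, hw₀⟩ : ∃ w₀, w₀ ∈ D.erase ν₂ := Finset.card_pos.mp (by omega)
    have hw₀' := Finset.mem_erase.mp hw₀
    rcases quad (x ν₂) hCs ha with h | h | h | h
    · exact rs_empty_absurd h (w := w₀) (Finset.mem_inter.mpr
        ⟨Finset.mem_insert_of_mem hw₀, Finset.mem_insert_of_mem hw₀'.2⟩) hw₀'.1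
    · exact rs_empty_absurd h (w := l) (Finset.mem_inter.mpr
        ⟨Finset.mem_insert_self _ _,
         Finset.mem_compl.mpr (not_mem_insert_of hlμ hlD)⟩) hlν
    · exact rs_empty_absurd h (w := μ) (Finset.mem_inter.mpr
        ⟨Finset.mem_compl.mpr (not_mem_insert_of (Ne.symm hlμ)
            (fun hm => hμD (Finset.mem_erase.mp hm).2)),
         Finset.mem_insert_self _ _⟩) (Ne.symm hν₂μ)
    · exact rs_empty_absurd h (w := w) (Finset.mem_inter.mpr
        ⟨Finset.mem_compl.mpr (not_mem_insert_of hwl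
            (fun hm => hwD (Finset.mem_erase.mp hm).2)),
         Finset.mem_compl.mpr (not_mem_insert_of hwμ hwD)⟩) hwν₂
  · have hC : C = D.erase ν₂ := by rw [← hCe, Finset.erase_eq_of_notMem hlC]
    rw [hC, rs_erase] at hCs
    exact hk hCs

lemma two_cherry {μ : A} {D : Finset A} (hμD : μ ∉ D) (hD2 : 2 ≤ D.card)
    (hco3 : 3 ≤ (Dᶜ.erase μ).card)
    {ν : A} (hνD : ν ∈ D) {l l' : A} (hl : l ∈ Dᶜ.erase μ) (hl' : l' ∈ Dᶜ.erase μ)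
    (hll' : l ≠ l')
    (hal : rs l (insert μ D) ∈ (x l).splits) (hal' : rs l' (insert μ D) ∈ (x l').splits)
    (hnaν : rs ν (insert μ D) ∉ (x ν).splits) : False := by
  simp only [Finset.mem_erase, Finset.mem_compl] at hl hl'
  obtain ⟨hlμ, hlD⟩ := hl
  obtain ⟨hl'μ, hl'D⟩ := hl'
  have hνμ : ν ≠ μ := fun he => hμD (he ▸ hνD)
  have hνl : ν ≠ l := fun he => hlD (he ▸ hνD)
  have hνl' : ν ≠ l' := fun he => hl'D (he ▸ hνD)
  obtain ⟨w, hw⟩ : ∃ w, w ∈ ((Dᶜ.erase μ).erase l).erase l' := by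
    apply Finset.card_pos.mp
    have e1 := Finset.pred_card_le_card_erase (s := Dᶜ.erase μ) (a := l)
    have e2 := Finset.pred_card_le_card_erase (s := (Dᶜ.erase μ).erase l) (a := l')
    omega
  simp only [Finset.mem_erase, Finset.mem_compl] at hw
  obtain ⟨hwl', hwl, hwμ, hwD⟩ := hw
  have hwν : w ≠ ν := fun he => hwD (he ▸ hνD)
  have getG : ∀ (k : A), k ≠ μ → k ∉ D → rs k (insert μ D) ∈ (x k).splits →
      rs ν (insert k (insert μ (D.erase ν))) ∈ (x ν).splits := by
    intro k hkμ hkD hak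
    have hkins : k ∉ insert μ D := by
      rw [Finset.mem_insert]; push_neg; exact ⟨hkμ, hkD⟩
    obtain ⟨C, hνC, hCs, hCe⟩ := transfer hcompat
      (show ν ≠ k from fun he => hkD (he ▸ hνD)) hak
      (by
        rw [Finset.erase_eq_of_notMem hkins, Finset.erase_insert_of_ne (Ne.symm hνμ)]
        rw [Finset.card_insert_of_notMem (fun hm => hμD (Finset.mem_erase.mp hm).2)]
        have := Finset.card_erase_of_mem hνD
        omega)
      (by
        rw [Finset.compl_insert]
        rw [Finset.erase_eq_of_notMem (s := (Dᶜ.erase μ).erase k)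
          (by simp only [Finset.mem_erase, Finset.mem_compl]; tauto)]
        have e1 := Finset.pred_card_le_card_erase (s := Dᶜ.erase μ) (a := k)
        omega)
    rw [Finset.erase_eq_of_notMem hkins, Finset.erase_insert_of_ne (Ne.symm hνμ)] at hCe
    by_cases hkC : k ∈ C
    · have hC : C = insert k (insert μ (D.erase ν)) := by
        rw [← hCe, Finset.insert_erase hkC]
      rwa [hC] at hCs
    · exfalso
      have hC : C = insert μ (D.erase ν) := by rw [← hCe, Finset.erase_eq_of_notMem hkC]
      rw [hC, ← Finset.erase_insert_of_ne (Ne.symm hνμ), rs_erase] at hCs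
      exact hnaν hCs
  have hGl := getG l hlμ hlD hal
  have hGl' := getG l' hl'μ hl'D hal'
  have hDerase : ∀ z : A, z ∉ D → z ∉ D.erase ν := fun z hz hm => hz (Finset.mem_erase.mp hm).2
  rcases quad (x ν) hGl hGl' with h | h | h | h
  · exact rs_empty_absurd h (w := μ) (Finset.mem_inter.mpr
      ⟨Finset.mem_insert_of_mem (Finset.mem_insert_self _ _),
       Finset.mem_insert_of_mem (Finset.mem_insert_self _ _)⟩) (Ne.symm hνμ)
  · exact rs_empty_absurd h (w := l) (Finset.mem_inter.mpr
      ⟨Finset.mem_insert_self _ _,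
       Finset.mem_compl.mpr (not_mem_insert_of hll'
         (not_mem_insert_of hlμ (hDerase l hlD)))⟩) (Ne.symm hνl)
  · exact rs_empty_absurd h (w := l') (Finset.mem_inter.mpr
      ⟨Finset.mem_compl.mpr (not_mem_insert_of (Ne.symm hll')
         (not_mem_insert_of hl'μ (hDerase l' hl'D))),
       Finset.mem_insert_self _ _⟩) (Ne.symm hνl')
  · exact rs_empty_absurd h (w := w) (Finset.mem_inter.mpr
      ⟨Finset.mem_compl.mpr (not_mem_insert_of hwl
         (not_mem_insert_of hwμ (hDerase w hwD))),
       Finset.mem_compl.mpr (not_mem_insert_of hwl'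
         (not_mem_insert_of hwμ (hDerase w hwD)))⟩) hwν

lemma lift_aux (hcard : 6 ≤ Fintype.card A) {μ : A} {D : Finset A} (hμD : μ ∉ D)
    (hD : rs μ D ∈ (x μ).splits) (hco3 : 3 ≤ (Dᶜ.erase μ).card) :
    GoodSet x D ∨ GoodSet x (insert μ D) := by
  have hD2 : 2 ≤ D.card := by
    have := (x μ).two_le _ hD
    rwa [rs_card, Finset.erase_eq_of_notMem hμD] at this
  have hDc2 : 2 ≤ Dᶜ.card := by
    have := Finset.card_erase_le (s := Dᶜ) (a := μ)
    omega
  have hco2' : ∀ κ : A, 2 ≤ ((Dᶜ.erase μ).erase κ).card := by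
    intro κ
    have := Finset.pred_card_le_card_erase (s := Dᶜ.erase μ) (a := κ)
    omega
  by_cases hall : ∀ ν : A, ν ≠ μ → 2 ≤ (D.erase ν).card → rs ν D ∈ (x ν).splits
  · left
    refine ⟨hD2, hDc2, fun ν h1 _ => ?_⟩
    by_cases hνμ : ν = μ
    · subst hνμ; exact hD
    · exact hall ν hνμ h1
  · push_neg at hall
    obtain ⟨ν₁, hν₁μ, hν₁D, hν₁k⟩ := hall
    have haν₁ : rs ν₁ (insert μ D) ∈ (x ν₁).splits := by
      rcases keep_or_add hcompat hν₁μ hμD hD hν₁D (hco2' ν₁) with h | h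
      · exact absurd h hν₁k
      · exact h
    have haddout : ∀ l, l ∈ Dᶜ.erase μ → rs l (insert μ D) ∈ (x l).splits := by
      intro l hl
      rw [Finset.mem_erase, Finset.mem_compl] at hl
      obtain ⟨hlμ, hlD⟩ := hl
      by_cases hlν₁ : l = ν₁
      · subst hlν₁; exact haν₁
      · have hnk : rs l D ∉ (x l).splits := fun hkl =>
          contagion hcompat hμD hco3 hν₁μ hν₁D hν₁k haν₁ hlD hlμ hlν₁ hkl
        rcases keep_or_add hcompat hlμ hμD hD
          (by rwa [Finset.erase_eq_of_notMem hlD]) (hco2' l) with h | h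
        · exact absurd h hnk
        · exact h
    right
    refine ⟨?_, ?_, fun ν _ _ => ?_⟩
    · rw [Finset.card_insert_of_notMem hμD]; omega
    · rw [Finset.compl_insert]; omega
    · by_cases hνμ : ν = μ
      · subst hνμ; rwa [rs_insert]
      · by_cases hνD : ν ∈ D
        · by_contra hna
          obtain ⟨l, hl, l', hl', hll'⟩ :=
            Finset.one_lt_card.mp (lt_of_lt_of_le (by norm_num) hco3)
          exact two_cherry hcompat hμD hD2 hco3 hνD hl hl' hll'
            (haddout l hl) (haddout l' hl') hna
        · refine haddout ν ?_
          rw [Finset.mem_erase, Finset.mem_compl]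
          exact ⟨hνμ, hνD⟩

lemma lift_full (hcard : 6 ≤ Fintype.card A) {μ : A} {D : Finset A} (hμD : μ ∉ D)
    (hD : rs μ D ∈ (x μ).splits) :
    GoodSet x D ∨ GoodSet x (insert μ D) := by
  by_cases hco3 : 3 ≤ (Dᶜ.erase μ).card
  · exact lift_aux hcompat hcard hμD hD hco3
  · have h2 : 2 ≤ (Dᶜ.erase μ).card := by
      have := (x μ).two_le_compl _ hD
      rwa [rs_compl, rs_card] at this
    have hμDc : μ ∈ Dᶜ := Finset.mem_compl.mpr hμD
    have hμE : μ ∉ Dᶜ.erase μ := Finset.notMem_erase _ _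
    have hE : rs μ (Dᶜ.erase μ) ∈ (x μ).splits := by
      rw [rs_erase, ← rs_compl]
      exact (x μ).compl_mem _ hD
    have hEc : (Dᶜ.erase μ)ᶜ = insert μ D := by
      rw [Finset.compl_erase, compl_compl]
    have hco3' : 3 ≤ ((Dᶜ.erase μ)ᶜ.erase μ).card := by
      rw [hEc, Finset.erase_insert hμD]
      have hcc := Finset.card_compl D
      have hce := Finset.card_erase_of_mem hμDc
      have := Finset.card_le_univ D
      omega
    rcases lift_aux hcompat hcard hμE hE hco3' with h | h
    · right
      have := h.compl
      rwa [hEc] at this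
    · left
      have := h.compl
      rwa [Finset.compl_insert, hEc, Finset.erase_insert hμD] at this

end FillerAux5
/-- Let `|A| = n + 1 ≥ 6` and let `(x_μ)` be a compatible
family of trees, `x_μ` having leaves labelled by `A \ {μ}`.  If there are
distinct labels `α, β` whose leaves are non-adjacent in `x_μ` for every
`μ ≠ α, β`, then there is a unique tree `y` with leaves labelled by `A`
such that `∂_μ y = x_μ` for all `μ`. -/
theorem unique_filler_of_nonadjacent_pair {A : Type*} [Fintype A] [DecidableEq A]
    (hcard : 6 ≤ Fintype.card A)
    (x : ∀ μ : A, LTree {a : A // a ≠ μ})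
    -- the simplicial compatibility `∂_α x_β = ∂_β x_α` for all distinct `α, β`,
    -- stated after identifying the label sets of the two sides with
    -- `{a : A // a ≠ β ∧ a ≠ α}` via the evident relabellings
    (hcompat : ∀ (α β : A) (h : α ≠ β),
      ((x β).del ⟨α, h⟩).relabel (delTwoEquiv β α h) =
        ((((x α).del ⟨β, h.symm⟩).relabel (delTwoEquiv α β h.symm)).relabel
          (Equiv.subtypeEquivRight (fun a => and_comm))))
    (α β : A) (hαβ : α ≠ β)
    (hnonadj : ∀ (μ : A) (h1 : α ≠ μ) (h2 : β ≠ μ),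
      ¬ (x μ).Adjacent ⟨α, h1⟩ ⟨β, h2⟩) :
    ∃! y : LTree A, ∀ μ : A, y.del μ = x μ := by
  have hfill : ∀ μ : A, (filler hcard x).del μ = x μ := by
    intro μ
    apply LTree.ext'
    ext C
    rw [mem_del_splits]
    constructor
    · rintro ⟨h1, h2, B, hB, rfl⟩
      rw [mem_filler] at hB
      refine hB.2.2 μ ?_ ?_
      · rwa [rs_card] at h1
      · rwa [rs_compl, rs_card] at h2
    · intro hC
      set D := C.map (Function.Embedding.subtype _) with hDdef
      have hμD : μ ∉ D := by
        intro hm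
        obtain ⟨a, -, ha⟩ := Finset.mem_map.mp hm
        rw [Function.Embedding.coe_subtype] at ha
        exact a.2 ha
      have hrsD : rs μ D = C := rs_map μ C
      have hDs : rs μ D ∈ (x μ).splits := by rwa [hrsD]
      have h1 : 2 ≤ C.card := (x μ).two_le _ hC
      have h2 : 2 ≤ Cᶜ.card := (x μ).two_le_compl _ hC
      rcases lift_full hcompat hcard hμD hDs with hG | hG
      · exact ⟨h1, h2, D, mem_filler.mpr hG, hrsD⟩
      · refine ⟨h1, h2, insert μ D, mem_filler.mpr hG, ?_⟩
        rw [rs_insert, hrsD]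
  exact ⟨filler hcard x, hfill,
    fun y' hy' => filler_unique hcard (fun μ => (hy' μ).trans (hfill μ).symm)⟩
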